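/- Let 0 < n < d be integers and μ a Radon measure on ℝ^d. There is a constant c = c(n,d) such that β_{μ,1}^n(x,r) ≤ c · α_μ^n(x,2r) for every x ∈ supp μ and every r > 0. -/

import Mathlib

open MeasureTheory Metric Set
open scoped ENNReal NNReal

noncomputable section

/-- `ℝ^d` with the Euclidean metric. -/
abbrev Ed (d : ℕ) := EuclideanSpace ℝ (Fin d)

/-- `L` is an affine `n`-plane in `ℝ^d`. -/
def IsAffinePlane (d n : ℕ) (L : AffineSubspace ℝ (Ed d)) : Prop :=
  (L : Set (Ed d)).Nonempty ∧ Module.finrank ℝ L.direction = n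

/-- The coefficient `β_{μ,p}^n(x,r)`. -/
def betaP (d n : ℕ) (p : ℝ) (μ : Measure (Ed d)) (x : Ed d) (r : ℝ) : ℝ :=
  sInf { b : ℝ | ∃ L : AffineSubspace ℝ (Ed d), IsAffinePlane d n L ∧
    b = (1 / r ^ n *
        ∫ y in closedBall x r, (Metric.infDist y (L : Set (Ed d)) / r) ^ p ∂μ) ^ (1 / p) }

/-- `dist_B(σ,ν)`: sup over ``1``-Lipschitz functions supported in `B` of `|∫ f dσ − ∫ f dν|`. -/
def distB (d : ℕ) (B : Set (Ed d)) (σ ν : Measure (Ed d)) : ℝ :=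
  sSup { t : ℝ | ∃ f : Ed d → ℝ, LipschitzWith 1 f ∧ Function.support f ⊆ B ∧
    t = |∫ y, f y ∂σ - ∫ y, f y ∂ν| }

/-- The coefficient `α_μ^n(x,r)`. -/
def alphaC (d n : ℕ) (μ : Measure (Ed d)) (x : Ed d) (r : ℝ) : ℝ :=
  (1 / r ^ (n + 1)) *
    sInf { t : ℝ | ∃ (a : ℝ≥0) (L : AffineSubspace ℝ (Ed d)), IsAffinePlane d n L ∧
      ((L : Set (Ed d)) ∩ closedBall x r).Nonempty ∧
      t = distB d (closedBall x (3 * r)) μ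
            ((a : ℝ≥0∞) • (μH[(n : ℝ)]).restrict (L : Set (Ed d))) }

/-- Jones' square function for the `β_{μ,p}^n` coefficients: `∫₀^∞ β_{μ,p}^n(x,r)² dr/r`. -/
def jonesBeta (d n : ℕ) (p : ℝ) (μ : Measure (Ed d)) (x : Ed d) : ℝ≥0∞ :=
  ∫⁻ r in Ioi (0 : ℝ), ENNReal.ofReal (betaP d n p μ x r ^ 2 / r)

/-- The square function `∫₀^∞ α_μ^n(x,r)² dr/r`. -/
def jonesAlpha (d n : ℕ) (μ : Measure (Ed d)) (x : Ed d) : ℝ≥0∞ :=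
  ∫⁻ r in Ioi (0 : ℝ), ENNReal.ofReal (alphaC d n μ x r ^ 2 / r)

/-- A set `E ⊂ ℝ^d` is `n`-rectifiable. -/
def IsRectifiableSet (d n : ℕ) (E : Set (Ed d)) : Prop :=
  ∃ f : ℕ → EuclideanSpace ℝ (Fin n) → Ed d,
    (∀ i, ∃ K : ℝ≥0, LipschitzWith K (f i)) ∧
    μH[(n : ℝ)] (E \ ⋃ i, Set.range (f i)) = 0

/-- A measure `μ` on `ℝ^d` is `n`-rectifiable. -/
def IsRectifiableMeasure (d n : ℕ) (μ : Measure (Ed d)) : Prop :=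
  ∃ E : Set (Ed d), IsRectifiableSet d n E ∧ μ Eᶜ = 0 ∧
    μ ≪ (μH[(n : ℝ)]).restrict E

/-- The support of a measure: points all whose neighbourhoods have positive measure. -/
def msupport (d : ℕ) (μ : Measure (Ed d)) : Set (Ed d) :=
  { x | ∀ r : ℝ, 0 < r → 0 < μ (ball x r) }

/-- The (half-open) dyadic cube of sidelength `2^k` determined by `m`. -/
def dyadicCube (d : ℕ) (k : ℤ) (m : Fin d → ℤ) : Set (Ed d) :=
  { y | ∀ i, (m i : ℝ) * 2 ^ k ≤ y i ∧ y i < ((m i : ℝ) + 1) * 2 ^ k }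

/-- The center of the dyadic cube. -/
def dyadicCenter (d : ℕ) (k : ℤ) (m : Fin d → ℤ) : Ed d :=
  (WithLp.equiv 2 (Fin d → ℝ)).symm fun i => ((m i : ℝ) + 1 / 2) * 2 ^ k

/-- The cube concentric with the dyadic cube `Q(k,m)`, dilated by the factor `c` (e.g. `3Q`). -/
def cubeDilate (d : ℕ) (c : ℝ) (k : ℤ) (m : Fin d → ℤ) : Set (Ed d) :=
  (fun y => dyadicCenter d k m + c • (y - dyadicCenter d k m)) '' dyadicCube d k m

/-- The ball `B_Q = B̄(x_Q, 3 diam Q)` associated with a dyadic cube. -/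
def ballBQ (d : ℕ) (k : ℤ) (m : Fin d → ℤ) : Set (Ed d) :=
  closedBall (dyadicCenter d k m) (3 * Metric.diam (dyadicCube d k m))

/-- The map `x ↦ (x, A x) ∈ ℝ^n × ℝ^{d-n} = ℝ^d`. -/
def graphMap (d n : ℕ) (A : EuclideanSpace ℝ (Fin n) → EuclideanSpace ℝ (Fin (d - n)))
    (x : EuclideanSpace ℝ (Fin n)) : Ed d :=
  (WithLp.equiv 2 (Fin d → ℝ)).symm fun i =>
    if h : (i : ℕ) < n then x ⟨i, h⟩ else A x ⟨(i : ℕ) - n, by have := i.isLt; omega⟩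

/-- `Γ ⊂ ℝ^d` is the graph of a `Λ`-Lipschitz function `A : ℝ^n → ℝ^{d-n}`. -/
def IsLipschitzGraph (d n : ℕ) (Λ : ℝ≥0) (Γ : Set (Ed d)) : Prop :=
  ∃ A : EuclideanSpace ℝ (Fin n) → EuclideanSpace ℝ (Fin (d - n)),
    LipschitzWith Λ A ∧ Γ = Set.range (graphMap d n A)

/-- The distance between two subsets of `ℝ^d`. -/
def setDist' (d : ℕ) (s t : Set (Ed d)) : ℝ :=
  sInf { r : ℝ | ∃ p ∈ s, ∃ q ∈ t, r = dist p q }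

lemma exists_plane (d n : ℕ) (hnd : n ≤ d) (x : Ed d) :
    ∃ L : AffineSubspace ℝ (Ed d), IsAffinePlane d n L ∧ x ∈ L := by
  classical
  set v : Fin n → Ed d := fun i => EuclideanSpace.single (Fin.castLE hnd i) (1:ℝ) with hv
  have hon : Orthonormal ℝ v := by
    have h1 : Orthonormal ℝ (EuclideanSpace.basisFun (Fin d) ℝ) :=
      (EuclideanSpace.basisFun (Fin d) ℝ).orthonormal
    have := h1.comp (Fin.castLE hnd) (Fin.castLE_injective hnd)
    convert this using 1; funext i; simp [hv, Function.comp, EuclideanSpace.basisFun_apply]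
  have hli : LinearIndependent ℝ v := hon.linearIndependent
  refine ⟨AffineSubspace.mk' x (Submodule.span ℝ (Set.range v)),
    ⟨⟨x, AffineSubspace.self_mem_mk' _ _⟩, ?_⟩, AffineSubspace.self_mem_mk' _ _⟩
  rw [AffineSubspace.direction_mk']
  rw [finrank_span_eq_card hli, Fintype.card_fin]

lemma plane_param (d n : ℕ) {L : AffineSubspace ℝ (Ed d)} (hL : IsAffinePlane d n L) :
    ∃ (F : (Fin n → ℝ) → Ed d) (C : ℝ≥0),
      LipschitzWith C F ∧ AntilipschitzWith 1 F ∧ Set.range F = (L : Set (Ed d)) := by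
  obtain ⟨⟨p₀, hp₀⟩, hdim⟩ := hL
  set ob := (stdOrthonormalBasis ℝ L.direction).reindex (finCongr hdim)
  set e := ob.repr.symm
  set T : (Fin n → ℝ) → EuclideanSpace ℝ (Fin n) := fun v => (WithLp.equiv 2 (Fin n → ℝ)).symm v
  set F : (Fin n → ℝ) → Ed d := fun v => p₀ + (e (T v) : Ed d) with hF
  have hdistF : ∀ v w, dist (F v) (F w) = dist (T v) (T w) := by
    intro v w
    rw [hF]
    simp only [dist_add_left]
    rw [show dist ((e (T v) : Ed d)) ((e (T w) : Ed d)) = dist (e (T v)) (e (T w)) from rfl]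
    rw [e.dist_map]
  refine ⟨F, (Fintype.card (Fin n) : ℝ≥0) ^ ((1:ℝ≥0∞) / 2).toReal, ?_, ?_, ?_⟩
  · refine LipschitzWith.of_dist_le_mul fun v w => ?_
    rw [hdistF]
    exact (PiLp.lipschitzWith_toLp 2 (fun _ : Fin n => ℝ)).dist_le_mul v w
  · refine AntilipschitzWith.of_le_mul_dist fun v w => ?_
    rw [hdistF, NNReal.coe_one, one_mul]
    have := (PiLp.lipschitzWith_ofLp 2 (fun _ : Fin n => ℝ)).dist_le_mul (T v) (T w)
    simpa [T] using this
  · apply Set.Subset.antisymm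
    · rintro _ ⟨v, rfl⟩
      have := AffineSubspace.vadd_mem_of_mem_direction (e (T v)).2 hp₀
      simpa [hF, add_comm] using this
    · intro y hy
      have hw : y -ᵥ p₀ ∈ L.direction := AffineSubspace.vsub_mem_direction hy hp₀
      refine ⟨WithLp.equiv 2 (Fin n → ℝ) (e.symm ⟨y - p₀, hw⟩), ?_⟩
      simp [hF, T]

lemma plane_hausdorff_finite (d n : ℕ) {L : AffineSubspace ℝ (Ed d)} (hL : IsAffinePlane d n L)
    (x : Ed d) (R : ℝ) : μH[(n:ℝ)] (closedBall x R ∩ (L : Set (Ed d))) < ⊤ := by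
  obtain ⟨F, C, hlip, hanti, hrange⟩ := plane_param d n hL
  set s := F ⁻¹' (closedBall x R ∩ (L : Set (Ed d))) with hs
  have himg : F '' s = closedBall x R ∩ (L : Set (Ed d)) := by
    rw [hs, Set.image_preimage_eq_inter_range, hrange, Set.inter_assoc, Set.inter_self]
  have hb : Bornology.IsBounded s :=
    hanti.isBounded_preimage (isBounded_closedBall.subset Set.inter_subset_left)
  obtain ⟨M, hM⟩ := (Metric.isBounded_iff_subset_closedBall 0).1 hb
  have hHpi : (μH[(n:ℝ)] : Measure (Fin n → ℝ)) = volume := by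
    have := MeasureTheory.hausdorffMeasure_pi_real (ι := Fin n)
    simpa [Fintype.card_fin] using this
  calc μH[(n:ℝ)] (closedBall x R ∩ (L : Set (Ed d)))
      = μH[(n:ℝ)] (F '' s) := by rw [himg]
    _ ≤ (C : ℝ≥0∞) ^ (n:ℝ) * μH[(n:ℝ)] s := hlip.hausdorffMeasure_image_le (by positivity) s
    _ < ⊤ := by
        apply ENNReal.mul_lt_top
        · exact ENNReal.rpow_lt_top_of_nonneg (by positivity) ENNReal.coe_ne_top
        · rw [hHpi]
          exact lt_of_le_of_lt (measure_mono hM) measure_closedBall_lt_top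

lemma key_ineq (d n : ℕ) (hn : 0 < n) (hnd : n < d) (μ : Measure (Ed d))
    [IsLocallyFiniteMeasure μ] (x : Ed d) (r : ℝ) (hr : 0 < r) (a : ℝ≥0)
    (L : AffineSubspace ℝ (Ed d)) (hL : IsAffinePlane d n L)
    (hLx : ((L : Set (Ed d)) ∩ closedBall x (2 * r)).Nonempty) :
    ∫ y in closedBall x r, Metric.infDist y (L : Set (Ed d)) ∂μ ≤
      distB d (closedBall x (3 * (2 * r))) μ
        ((a : ℝ≥0∞) • (μH[(n : ℝ)]).restrict (L : Set (Ed d))) := by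
  set ν : Measure (Ed d) := (a : ℝ≥0∞) • (μH[(n : ℝ)]).restrict (L : Set (Ed d)) with hν
  set B : Set (Ed d) := closedBall x (3 * (2 * r)) with hB
  set f : Ed d → ℝ := fun y =>
    min (Metric.infDist y (L : Set (Ed d))) (max 0 (4 * r - dist y x)) with hf
  obtain ⟨z, hzL, hzB⟩ := hLx
  have hLne : (L : Set (Ed d)).Nonempty := ⟨z, hzL⟩
  -- basic properties of f
  have hf_lip : LipschitzWith 1 f := by
    have h1 : LipschitzWith 1 fun y : Ed d => dist y x := LipschitzWith.dist_left x
    have h2 : LipschitzWith 1 fun y : Ed d => 4 * r - dist y x := by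
      have := (LipschitzWith.const (4 * r) (α := Ed d)).sub h1
      simpa using this
    have h3 := (lipschitz_infDist_pt (L : Set (Ed d))).min (h2.const_max 0)
    simpa using h3
  have hf_nonneg : ∀ y, 0 ≤ f y := fun y =>
    le_min Metric.infDist_nonneg (le_max_left _ _)
  have hf_supp : Function.support f ⊆ B := by
    intro y hy
    rw [Function.mem_support] at hy
    have hpos : 0 < f y := lt_of_le_of_ne (hf_nonneg y) (Ne.symm hy)
    have h4 : 0 < 4 * r - dist y x := by
      by_contra h
      push_neg at h
      have hmax : max 0 (4 * r - dist y x) = 0 := max_eq_left h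
      have hle : f y ≤ max 0 (4 * r - dist y x) := min_le_right _ _
      rw [hmax] at hle
      linarith
    have hdd : dist y x ≤ 3 * (2 * r) := by linarith
    exact mem_closedBall.2 hdd
  have hf_zeroL : ∀ y ∈ (L : Set (Ed d)), f y = 0 := by
    intro y hy
    have : Metric.infDist y (L : Set (Ed d)) = 0 := Metric.infDist_zero_of_mem hy
    rw [hf]; simp only [this]
    exact min_eq_left (le_max_left _ _)
  have hf_eq : ∀ y ∈ closedBall x r, f y = Metric.infDist y (L : Set (Ed d)) := by
    intro y hy
    rw [mem_closedBall] at hy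
    have hd : Metric.infDist y (L : Set (Ed d)) ≤ 3 * r := by
      refine le_trans (Metric.infDist_le_dist_of_mem hzL) ?_
      calc dist y z ≤ dist y x + dist x z := dist_triangle y x z
        _ ≤ r + 2 * r := by
            have := mem_closedBall.1 hzB
            rw [dist_comm x z]; linarith
        _ = 3 * r := by ring
    refine min_eq_left ?_
    refine le_trans hd (le_trans ?_ (le_max_right _ _))
    linarith
  have hf_cont : Continuous f := hf_lip.continuous
  have hf_cs : HasCompactSupport f := by
    refine HasCompactSupport.intro (isCompact_closedBall x (3 * (2 * r))) fun y hy => ?_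
    by_contra h
    exact hy (hf_supp h)
  have hf_int : Integrable f μ := hf_cont.integrable_of_hasCompactSupport hf_cs
  -- ∫ f dν = 0
  have hfν : ∫ y, f y ∂ν = 0 := by
    rw [hν, integral_smul_measure]
    have hsupp_open : IsOpen (Function.support f) := by
      rw [Function.support_eq_preimage]
      exact hf_cont.isOpen_preimage _ isOpen_compl_singleton
    have h0 : (μH[(n : ℝ)]).restrict (L : Set (Ed d)) (Function.support f) = 0 := by
      rw [Measure.restrict_apply hsupp_open.measurableSet]
      have hempty : Function.support f ∩ (L : Set (Ed d)) = ∅ := by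
        ext y
        simp only [Set.mem_inter_iff, Set.mem_empty_iff_false, iff_false, not_and,
          Function.mem_support]
        intro hy hyL
        exact hy (hf_zeroL y hyL)
      rw [hempty, measure_empty]
    have haez : f =ᵐ[(μH[(n : ℝ)]).restrict (L : Set (Ed d))] 0 := by
      rw [Filter.EventuallyEq, ae_iff]
      simpa [Function.support] using h0
    rw [integral_eq_zero_of_ae haez, smul_zero]
  -- finiteness of measures on B
  have hνB : ν B < ⊤ := by
    rw [hν, Measure.smul_apply, Measure.restrict_apply measurableSet_closedBall]
    exact ENNReal.mul_lt_top ENNReal.coe_lt_top (plane_hausdorff_finite d n hL x _)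
  have hμB : μ B < ⊤ := (isCompact_closedBall x _).measure_lt_top
  -- BddAbove of the distB set
  set M : ℝ := 2 * (3 * (2 * r)) + 1 with hM
  have habs : ∀ g : Ed d → ℝ, LipschitzWith 1 g → Function.support g ⊆ B →
      ∀ y, |g y| ≤ M := by
    intro g hg hgs y
    by_cases hy : g y = 0
    · rw [hy]; simp [hM]; positivity
    · have hyB : y ∈ B := hgs (Function.mem_support.2 hy)
      have hdyx : dist y x ≤ 3 * (2 * r) := mem_closedBall.1 hyB
      set u : Ed d := EuclideanSpace.single (⟨0, lt_trans hn hnd⟩ : Fin d) (1:ℝ) with hu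
      have hnu : ‖u‖ = 1 := by rw [hu, EuclideanSpace.norm_single, norm_one]
      set zz : Ed d := y + M • u with hzz
      have hMpos : (0:ℝ) < M := by rw [hM]; positivity
      have hdyz : dist y zz = M := by
        have h5 : y - (y + M • u) = -(M • u) := by abel
        rw [hzz, dist_eq_norm, h5, norm_neg, norm_smul, hnu, mul_one, Real.norm_eq_abs,
          abs_of_pos hMpos]
      have hzzB : zz ∉ B := by
        intro hzzB
        have h1 : dist zz x ≤ 3 * (2 * r) := mem_closedBall.1 hzzB
        have h2 : dist y zz ≤ dist y x + dist x zz := dist_triangle y x zz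
        rw [dist_comm x zz] at h2
        rw [hdyz] at h2
        have : M ≤ 2 * (3 * (2 * r)) := by linarith
        rw [hM] at this; linarith
      have hgz : g zz = 0 := by
        by_contra h
        exact hzzB (hgs (Function.mem_support.2 h))
      calc |g y| = |g y - g zz| := by rw [hgz, sub_zero]
        _ ≤ dist y zz := by
            have := hg.dist_le_mul y zz
            rw [NNReal.coe_one, one_mul] at this
            simpa [Real.dist_eq] using this
        _ = M := hdyz
  have hintbound : ∀ (σ : Measure (Ed d)), σ B < ⊤ → ∀ g : Ed d → ℝ, LipschitzWith 1 g →
      Function.support g ⊆ B → |∫ y, g y ∂σ| ≤ M * (σ B).toReal := by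
    intro σ hσ g hg hgs
    have h0 : ∀ y, y ∉ B → g y = 0 := fun y hy => by
      by_contra h
      exact hy (hgs (Function.mem_support.2 h))
    rw [← MeasureTheory.setIntegral_eq_integral_of_forall_compl_eq_zero h0]
    have := MeasureTheory.norm_setIntegral_le_of_norm_le_const (μ := σ) (s := B) (f := g) hσ
      (fun y _ => by rw [Real.norm_eq_abs]; exact habs g hg hgs y)
    simpa [Real.norm_eq_abs, measureReal_def] using this
  have hbdd : BddAbove { t : ℝ | ∃ g : Ed d → ℝ, LipschitzWith 1 g ∧
      Function.support g ⊆ B ∧ t = |∫ y, g y ∂μ - ∫ y, g y ∂ν| } := by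
    refine ⟨M * (μ B).toReal + M * (ν B).toReal, ?_⟩
    rintro t ⟨g, hg, hgs, rfl⟩
    calc |∫ y, g y ∂μ - ∫ y, g y ∂ν| ≤ |∫ y, g y ∂μ| + |∫ y, g y ∂ν| := abs_sub _ _
      _ ≤ M * (μ B).toReal + M * (ν B).toReal :=
          add_le_add (hintbound μ hμB g hg hgs) (hintbound ν hνB g hg hgs)
  -- conclusion
  have hmem : |∫ y, f y ∂μ - ∫ y, f y ∂ν| ∈ { t : ℝ | ∃ g : Ed d → ℝ, LipschitzWith 1 g ∧
      Function.support g ⊆ B ∧ t = |∫ y, g y ∂μ - ∫ y, g y ∂ν| } :=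
    ⟨f, hf_lip, hf_supp, rfl⟩
  have hle : |∫ y, f y ∂μ - ∫ y, f y ∂ν| ≤ distB d B μ ν := le_csSup hbdd hmem
  have hfμ_nonneg : 0 ≤ ∫ y, f y ∂μ := integral_nonneg hf_nonneg
  rw [hfν, sub_zero, abs_of_nonneg hfμ_nonneg] at hle
  refine le_trans ?_ hle
  rw [show (∫ y in closedBall x r, Metric.infDist y (L : Set (Ed d)) ∂μ)
      = ∫ y in closedBall x r, f y ∂μ from
    (setIntegral_congr_fun measurableSet_closedBall fun y hy => (hf_eq y hy).symm)]
  exact setIntegral_le_integral hf_int (Filter.Eventually.of_forall hf_nonneg)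

/-- There is `c = c(n,d)` such that `β_{μ,1}^n(x,r) ≤ c α_μ^n(x,2r)` for every
Radon measure `μ` on `ℝ^d`, every `x ∈ supp μ` and every `r > 0`. -/
theorem stmt8 (d n : ℕ) (hn : 0 < n) (hnd : n < d) :
    ∃ c : ℝ, 0 < c ∧
      ∀ μ : Measure (Ed d), IsLocallyFiniteMeasure μ →
        ∀ x ∈ msupport d μ, ∀ r : ℝ, 0 < r →
          betaP d n 1 μ x r ≤ c * alphaC d n μ x (2 * r) := by
  refine ⟨2 ^ (n + 1), by positivity, ?_⟩
  intro μ hμ x _hx r hr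
  haveI := hμ
  set Sα := { t : ℝ | ∃ (a : ℝ≥0) (L : AffineSubspace ℝ (Ed d)), IsAffinePlane d n L ∧
      ((L : Set (Ed d)) ∩ closedBall x (2 * r)).Nonempty ∧
      t = distB d (closedBall x (3 * (2 * r))) μ
            ((a : ℝ≥0∞) • (μH[(n : ℝ)]).restrict (L : Set (Ed d))) } with hSα
  have hSne : Sα.Nonempty := by
    obtain ⟨L₀, hL₀, hxL₀⟩ := exists_plane d n hnd.le x
    exact ⟨_, 0, L₀, hL₀, ⟨x, hxL₀, mem_closedBall_self (by positivity)⟩, rfl⟩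
  have hbdd : BddBelow { b : ℝ | ∃ L : AffineSubspace ℝ (Ed d), IsAffinePlane d n L ∧
      b = (1 / r ^ n *
        ∫ y in closedBall x r,
          (Metric.infDist y (L : Set (Ed d)) / r) ^ (1:ℝ) ∂μ) ^ (1 / (1:ℝ)) } := by
    refine ⟨0, ?_⟩
    rintro b ⟨L', _hL', rfl⟩
    have h1 : 0 ≤ ∫ y in closedBall x r,
        (Metric.infDist y (L' : Set (Ed d)) / r) ^ (1:ℝ) ∂μ :=
      integral_nonneg fun y => Real.rpow_nonneg (div_nonneg Metric.infDist_nonneg hr.le) 1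
    have h2 : (0:ℝ) ≤ 1 / r ^ n := by positivity
    exact Real.rpow_nonneg (mul_nonneg h2 h1) _
  have hkey : ∀ t ∈ Sα, betaP d n 1 μ x r * r ^ (n + 1) ≤ t := by
    rintro t ⟨a, L, hL, hne, rfl⟩
    have hint := key_ineq d n hn hnd μ x r hr a L hL hne
    set I := ∫ y in closedBall x r, Metric.infDist y (L : Set (Ed d)) ∂μ with hI
    have hb₀mem : (1 / r ^ n * ∫ y in closedBall x r,
        (Metric.infDist y (L : Set (Ed d)) / r) ^ (1:ℝ) ∂μ) ^ (1 / (1:ℝ)) ∈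
        { b : ℝ | ∃ L' : AffineSubspace ℝ (Ed d), IsAffinePlane d n L' ∧
          b = (1 / r ^ n * ∫ y in closedBall x r,
            (Metric.infDist y (L' : Set (Ed d)) / r) ^ (1:ℝ) ∂μ) ^ (1 / (1:ℝ)) } :=
      ⟨L, hL, rfl⟩
    have hsimp : (1 / r ^ n * ∫ y in closedBall x r,
        (Metric.infDist y (L : Set (Ed d)) / r) ^ (1:ℝ) ∂μ) ^ (1 / (1:ℝ))
        = 1 / r ^ n * (I / r) := by
      rw [show (1:ℝ) / 1 = 1 by norm_num, Real.rpow_one]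
      congr 1
      rw [hI, ← integral_div]
      congr 1
      funext y
      rw [Real.rpow_one]
    have hbeta_le : betaP d n 1 μ x r ≤ 1 / r ^ n * (I / r) := by
      have h := csInf_le hbdd hb₀mem
      rw [hsimp] at h
      exact h
    have harith : (1 / r ^ n * (I / r)) * r ^ (n + 1) = I := by
      rw [pow_succ]
      field_simp
    calc betaP d n 1 μ x r * r ^ (n + 1)
        ≤ (1 / r ^ n * (I / r)) * r ^ (n + 1) :=
          mul_le_mul_of_nonneg_right hbeta_le (by positivity)
      _ = I := harith
      _ ≤ _ := hint
  have hlow : betaP d n 1 μ x r * r ^ (n + 1) ≤ sInf Sα := le_csInf hSne hkey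
  have halpha : alphaC d n μ x (2 * r) = 1 / (2 * r) ^ (n + 1) * sInf Sα := by
    rw [alphaC, hSα]
  rw [halpha]
  have hrw : (2:ℝ) ^ (n + 1) * (1 / (2 * r) ^ (n + 1) * sInf Sα) = sInf Sα / r ^ (n + 1) := by
    rw [mul_pow]
    field_simp
  rw [hrw, le_div_iff₀ (by positivity)]
  exact hlow

end
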